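/- Let f be λ-strongly convex and β-smooth, let S be a linear subspace containing w_t, and set w_{t+1} = w_t − η_t P_S g for some vector g, where η_t > 0. Then for any u ∈ S and any r ∈ ℝ, f(w_{t+1}) − r ≤ (1 − 2λη_t)(f(w_t) − r) + (η_t² β ‖P_S g‖²)/2 + η_t[2λ(f(u) − r) + ⟨P_S∇f(w_t) − P_S g, ∇f(w_t)⟩]. -/

import Mathlib

open scoped RealInnerProductSpace

theorem stmt_4 {d : ℕ} (lam β : ℝ) (hlam : 0 < lam)
    (f : EuclideanSpace ℝ (Fin d) → ℝ) (gradf : EuclideanSpace ℝ (Fin d) → EuclideanSpace ℝ (Fin d))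
    (hsc : ∀ v w : EuclideanSpace ℝ (Fin d),
      f v ≥ f w + ⟪gradf w, v - w⟫ + lam / 2 * ‖v - w‖ ^ 2)
    (hsm : ∀ v w : EuclideanSpace ℝ (Fin d),
      f v ≤ f w + ⟪gradf w, v - w⟫ + β / 2 * ‖v - w‖ ^ 2)
    (S : Submodule ℝ (EuclideanSpace ℝ (Fin d)))
    (wt g u : EuclideanSpace ℝ (Fin d)) (hwt : wt ∈ S) (hu : u ∈ S)
    (ηt : ℝ) (hη : 0 < ηt)
    (wt1 : EuclideanSpace ℝ (Fin d))
    (hstep : wt1 = wt - ηt • (S.orthogonalProjectionOnto g : EuclideanSpace ℝ (Fin d)))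
    (r : ℝ) :
    f wt1 - r ≤ (1 - 2 * lam * ηt) * (f wt - r)
      + ηt ^ 2 * β * ‖(S.orthogonalProjectionOnto g : EuclideanSpace ℝ (Fin d))‖ ^ 2 / 2
      + ηt * (2 * lam * (f u - r)
        + ⟪(S.orthogonalProjectionOnto (gradf wt) : EuclideanSpace ℝ (Fin d))
            - (S.orthogonalProjectionOnto g : EuclideanSpace ℝ (Fin d)), gradf wt⟫) := by
  set G := gradf wt with hG
  set p : EuclideanSpace ℝ (Fin d) := (S.orthogonalProjectionOnto g : EuclideanSpace ℝ (Fin d)) with hp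
  set q : EuclideanSpace ℝ (Fin d) := (S.orthogonalProjectionOnto G : EuclideanSpace ℝ (Fin d)) with hq
  -- inner product identities
  have proj_eq : ∀ y : EuclideanSpace ℝ (Fin d), ∀ x ∈ S,
      ⟪y, x⟫ = ⟪(S.orthogonalProjectionOnto y : EuclideanSpace ℝ (Fin d)), x⟫ := by
    intro y x hx
    have h0 : ⟪y - (S.orthogonalProjectionOnto y : EuclideanSpace ℝ (Fin d)), x⟫ = 0 :=
      S.starProjection_inner_eq_zero y x hx
    rw [inner_sub_left] at h0
    linarith
  have hpS : p ∈ S := (S.orthogonalProjectionOnto g).2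
  have hqS : q ∈ S := (S.orthogonalProjectionOnto G).2
  have hGp : ⟪G, p⟫ = ⟪p, q⟫ := by
    rw [proj_eq G p hpS, ← hq, real_inner_comm]
  have hqG : ⟪q, G⟫ = ‖q‖ ^ 2 := by
    rw [real_inner_comm, proj_eq G q hqS, ← hq, real_inner_self_eq_norm_sq, sq]
  have hpG : ⟪p, G⟫ = ⟪p, q⟫ := by
    rw [real_inner_comm, proj_eq G p hpS, ← hq, real_inner_comm]
  -- smoothness step
  have h1 := hsm wt1 wt
  have hdiff : wt1 - wt = -(ηt • p) := by rw [hstep]; abel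
  rw [hdiff] at h1
  have h1' : f wt1 ≤ f wt - ηt * ⟪p, q⟫ + β / 2 * (ηt ^ 2 * ‖p‖ ^ 2) := by
    have : ⟪G, -(ηt • p)⟫ = -(ηt * ⟪G, p⟫) := by
      rw [inner_neg_right, real_inner_smul_right]
    have hn : ‖-(ηt • p)‖ ^ 2 = ηt ^ 2 * ‖p‖ ^ 2 := by
      rw [norm_neg, norm_smul, mul_pow, Real.norm_eq_abs, sq_abs]
    rw [this, hn, hGp] at h1
    linarith
  -- strong convexity step : 2 lam (f wt - f u) ≤ ‖q‖²
  have h2 := hsc u wt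
  have hmem : u - wt ∈ S := Submodule.sub_mem S hu hwt
  have hGu : ⟪G, u - wt⟫ = ⟪q, u - wt⟫ := by
    rw [proj_eq G (u - wt) hmem, ← hq]
  rw [hGu] at h2
  have hcs : ⟪q, u - wt⟫ ≥ -(‖q‖ * ‖u - wt‖) := by
    have := abs_real_inner_le_norm q (u - wt)
    cases abs_le.mp this with
    | intro h _ => linarith
  have key : 2 * lam * (f wt - f u) ≤ ‖q‖ ^ 2 := by
    nlinarith [sq_nonneg (‖q‖ - lam * ‖u - wt‖), sq_nonneg (‖u - wt‖)]
  -- combine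
  have hexpand : ⟪q - p, G⟫ = ‖q‖ ^ 2 - ⟪p, q⟫ := by
    rw [inner_sub_left, hqG, hpG]
  rw [hexpand]
  nlinarith [mul_le_mul_of_nonneg_left key hη.le]
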